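/- Claim (variance bound under covariance misspecification). Assume (A4) and that all weights satisfy w_{k,i} ∈ [0,1]. Then the covariance matrix of the quasi-MLE θ̃_k under the true model Y ~ N(f, Σ0), namely V_k = B_k⁻¹ Ψ W_k Σ0 W_k Ψᵀ B_k⁻¹, satisfies V_k ⪯ (1+δ) B_k⁻¹ in the Löwner partial order; equality holds when the weights are rectangular (0/1-valued) and δ = 0. -/

import Mathlib

open MeasureTheory ProbabilityTheory Matrix Real

noncomputable section

namespace SpatialAdapt

/-- The law `N(m, diag(s i ^ 2))` on `ℝ^n`: product of independent one-dimensional Gaussians. -/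
def gaussianVec (n : ℕ) (m s : Fin n → ℝ) : Measure (Fin n → ℝ) :=
  Measure.pi fun i => gaussianReal (m i) (Real.toNNReal (s i ^ 2))

/-- Löwner partial order on symmetric matrices: `A ⪯ B` iff `B - A` is positive semidefinite. -/
def LoewnerLE {ι : Type*} [Fintype ι] (A B : Matrix ι ι ℝ) : Prop :=
  (B - A).PosSemidef

/-- Diagonal covariance matrix `diag(s i ^ 2)`. -/
def covMat (n : ℕ) (s : Fin n → ℝ) : Matrix (Fin n) (Fin n) ℝ :=
  Matrix.diagonal fun i => s i ^ 2

/-- `W = Σ^{-1/2} 𝒲 Σ^{-1/2} = diag(w i / σ i ^ 2)`. -/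
def Wmat (n : ℕ) (σv : Fin n → ℝ) (w : Fin n → ℝ) : Matrix (Fin n) (Fin n) ℝ :=
  Matrix.diagonal fun i => w i / σv i ^ 2

/-- `B = Ψ W Ψᵀ`. -/
def Bmat (n p : ℕ) (σv : Fin n → ℝ) (Ψ : Matrix (Fin p) (Fin n) ℝ) (w : Fin n → ℝ) :
    Matrix (Fin p) (Fin p) ℝ :=
  Ψ * Wmat n σv w * Ψᵀ

/-- `D = B⁻¹ Ψ W`. -/
def Dmat (n p : ℕ) (σv : Fin n → ℝ) (Ψ : Matrix (Fin p) (Fin n) ℝ) (w : Fin n → ℝ) :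
    Matrix (Fin p) (Fin n) ℝ :=
  (Bmat n p σv Ψ w)⁻¹ * Ψ * Wmat n σv w

/-- The quasi-MLE `θ̃ = B⁻¹ Ψ W y`. -/
def thetaTilde (n p : ℕ) (σv : Fin n → ℝ) (Ψ : Matrix (Fin p) (Fin n) ℝ) (w : Fin n → ℝ)
    (y : Fin n → ℝ) : Fin p → ℝ :=
  (Dmat n p σv Ψ w).mulVec y

/-- Quadratic form `v ⬝ B v`. -/
def quadForm {p : ℕ} (B : Matrix (Fin p) (Fin p) ℝ) (v : Fin p → ℝ) : ℝ :=
  v ⬝ᵥ B.mulVec v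

/-- The test statistic `T_{lm} = (θ̃_l - θ̃_m)ᵀ B_l (θ̃_l - θ̃_m)`. -/
def Tstat (n p : ℕ) (σv : Fin n → ℝ) (Ψ : Matrix (Fin p) (Fin n) ℝ) (w : ℕ → Fin n → ℝ)
    (l m : ℕ) (y : Fin n → ℝ) : ℝ :=
  quadForm (Bmat n p σv Ψ (w l))
    (thetaTilde n p σv Ψ (w l) y - thetaTilde n p σv Ψ (w m) y)

/-- The adaptive index `k̂ = max {k ≤ K : T_{lm} ≤ z_l for all 1 ≤ l < m ≤ k}`. -/
def khat (n p K : ℕ) (σv : Fin n → ℝ) (Ψ : Matrix (Fin p) (Fin n) ℝ) (w : ℕ → Fin n → ℝ)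
    (z : ℕ → ℝ) (y : Fin n → ℝ) : ℕ :=
  sSup {k | k ≤ K ∧ ∀ l m, 1 ≤ l → l < m → m ≤ k → Tstat n p σv Ψ w l m y ≤ z l}

/-- The adaptive estimator `θ̂ = θ̃_{k̂}`. -/
def thetaHat (n p K : ℕ) (σv : Fin n → ℝ) (Ψ : Matrix (Fin p) (Fin n) ℝ) (w : ℕ → Fin n → ℝ)
    (z : ℕ → ℝ) (y : Fin n → ℝ) : Fin p → ℝ :=
  thetaTilde n p σv Ψ (w (khat n p K σv Ψ w z y)) y

/-- The last accepted estimator after `k` steps: `θ̂_k = θ̃_{min(k, k̂)}`. -/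
def thetaHatStep (n p K : ℕ) (σv : Fin n → ℝ) (Ψ : Matrix (Fin p) (Fin n) ℝ)
    (w : ℕ → Fin n → ℝ) (z : ℕ → ℝ) (k : ℕ) (y : Fin n → ℝ) : Fin p → ℝ :=
  thetaTilde n p σv Ψ (w (min k (khat n p K σv Ψ w z y))) y

/-- `C(p, r) = E|χ²_p|^r = 2^r Γ(r + p/2) / Γ(p/2)`. -/
def Cpr (p : ℕ) (r : ℝ) : ℝ :=
  2 ^ r * Real.Gamma (r + p / 2) / Real.Gamma (p / 2)

/-- `P(χ²_p ≥ t)`, the tail of the chi-squared distribution with `p` degrees of freedom. -/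
def chiSqTail (p : ℕ) (t : ℝ) : ℝ :=
  ((Measure.pi fun _ : Fin p => gaussianReal 0 1) {x | t ≤ ∑ i, x i ^ 2}).toReal

/-- The `pk × pk` joint covariance `𝔻_k (J_k ⊗ Σm) 𝔻_kᵀ`, whose `(l, m)` block
is `D_l Σm D_mᵀ` (blocks are indexed by `1, …, k`, i.e. by `Fin k` shifted by one). -/
def jointCov (n p : ℕ) (σv σm : Fin n → ℝ) (Ψ : Matrix (Fin p) (Fin n) ℝ)
    (w : ℕ → Fin n → ℝ) (k : ℕ) : Matrix (Fin k × Fin p) (Fin k × Fin p) ℝ :=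
  Matrix.of fun a b =>
    (Dmat n p σv Ψ (w (a.1 + 1)) * covMat n σm * (Dmat n p σv Ψ (w (b.1 + 1)))ᵀ) a.2 b.2

/-- The stacked bias vector `b(k) = (θ̄_1 - θ, …, θ̄_k - θ)`. -/
def biasVec (n p : ℕ) (σv : Fin n → ℝ) (Ψ : Matrix (Fin p) (Fin n) ℝ) (w : ℕ → Fin n → ℝ)
    (k : ℕ) (f : Fin n → ℝ) (θ : Fin p → ℝ) : Fin k × Fin p → ℝ :=
  fun a => (thetaTilde n p σv Ψ (w (a.1 + 1)) f - θ) a.2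

/-- The modeling bias `Δ(k) = b(k)ᵀ 𝚺_k⁻¹ b(k)`. -/
def DeltaK (n p : ℕ) (σv : Fin n → ℝ) (Ψ : Matrix (Fin p) (Fin n) ℝ) (w : ℕ → Fin n → ℝ)
    (k : ℕ) (f : Fin n → ℝ) (θ : Fin p → ℝ) : ℝ :=
  biasVec n p σv Ψ w k f θ ⬝ᵥ
    (jointCov n p σv σv Ψ w k)⁻¹.mulVec (biasVec n p σv Ψ w k f θ)

/-- The componentwise `k × k` covariance `𝚺_{k,j}` with entries `(D_l Σm D_mᵀ)_{jj}`. -/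
def jointCovComp (n p : ℕ) (σv σm : Fin n → ℝ) (Ψ : Matrix (Fin p) (Fin n) ℝ)
    (w : ℕ → Fin n → ℝ) (k : ℕ) (j : Fin p) : Matrix (Fin k) (Fin k) ℝ :=
  Matrix.of fun a b =>
    (Dmat n p σv Ψ (w (a.1 + 1)) * covMat n σm * (Dmat n p σv Ψ (w (b.1 + 1)))ᵀ) j j

/-- The componentwise bias vector `b_j(k)`. -/
def biasVecComp (n p : ℕ) (σv : Fin n → ℝ) (Ψ : Matrix (Fin p) (Fin n) ℝ)
    (w : ℕ → Fin n → ℝ) (k : ℕ) (f : Fin n → ℝ) (θ : Fin p → ℝ) (j : Fin p) : Fin k → ℝ :=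
  fun a => (thetaTilde n p σv Ψ (w (a.1 + 1)) f - θ) j

/-- The componentwise modeling bias `Δ_j(k) = b_j(k)ᵀ 𝚺_{k,j}⁻¹ b_j(k)`. -/
def DeltaComp (n p : ℕ) (σv : Fin n → ℝ) (Ψ : Matrix (Fin p) (Fin n) ℝ)
    (w : ℕ → Fin n → ℝ) (k : ℕ) (f : Fin n → ℝ) (θ : Fin p → ℝ) (j : Fin p) : ℝ :=
  biasVecComp n p σv Ψ w k f θ j ⬝ᵥ
    (jointCovComp n p σv σv Ψ w k j)⁻¹.mulVec (biasVecComp n p σv Ψ w k f θ j)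

open scoped Classical in
/-- `φ(δ)`: equal to `1` for homogeneous errors, `2(1+δ)/(1-δ)² - 1` otherwise. -/
def varphi (n : ℕ) (σ0 σv : Fin n → ℝ) (δ : ℝ) : ℝ :=
  if ∃ c0 c : ℝ, (∀ i, σ0 i = c0) ∧ (∀ i, σv i = c) then 1
  else 2 * (1 + δ) / (1 - δ) ^ 2 - 1

/-- `σ̄²_max(k) = max_{1 ≤ l ≤ k} σ²_max(l)`. -/
def sbarMax (σmax : ℕ → ℝ) (k : ℕ) : ℝ :=
  sSup (σmax '' Set.Icc 1 k)

/-- Euclidean norm on `ℝ^p`. -/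
def enorm {p : ℕ} (v : Fin p → ℝ) : ℝ :=
  Real.sqrt (∑ i, v i ^ 2)


/-- **Variance bound under covariance misspecification.** Under (A4) and weights in `[0,1]`,
the covariance `V_k = B_k⁻¹ Ψ W_k Σ₀ W_k Ψᵀ B_k⁻¹` of the quasi-MLE satisfies
`V_k ⪯ (1+δ) B_k⁻¹`; equality holds for rectangular (0/1) weights when `δ = 0`
(i.e. `Σ₀ = Σ`). -/
theorem variance_bound_misspecification
    (n p : ℕ) (hpn : p < n)
    (σv σ0 : Fin n → ℝ) (hσ : ∀ i, 0 < σv i) (hσ0 : ∀ i, 0 < σ0 i)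
    (Ψ : Matrix (Fin p) (Fin n) ℝ) (hA1 : Ψ.rank = p)
    (wk : Fin n → ℝ) (hw : ∀ i, wk i ∈ Set.Icc (0 : ℝ) 1)
    (hB : (Bmat n p σv Ψ wk).PosDef)
    (δ : ℝ) (hδ0 : 0 ≤ δ) (hδ1 : δ < 1)
    (hA4 : ∀ i, (1 - δ) * σv i ^ 2 ≤ σ0 i ^ 2 ∧ σ0 i ^ 2 ≤ (1 + δ) * σv i ^ 2) :
    LoewnerLE (Dmat n p σv Ψ wk * covMat n σ0 * (Dmat n p σv Ψ wk)ᵀ)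
      ((1 + δ) • (Bmat n p σv Ψ wk)⁻¹) ∧
    ((∀ i, wk i = 0 ∨ wk i = 1) → (∀ i, σ0 i ^ 2 = σv i ^ 2) →
      Dmat n p σv Ψ wk * covMat n σ0 * (Dmat n p σv Ψ wk)ᵀ =
        (Bmat n p σv Ψ wk)⁻¹) := by
  classical
  set W := Wmat n σv wk with hW
  set B := Bmat n p σv Ψ wk with hBdef
  have hWsym : Wᵀ = W := by simp [hW, Wmat]
  have hBeq : Ψ * W * Ψᵀ = B := by rw [hBdef]; rfl
  have hBsym : Bᵀ = B := by
    rw [← hBeq, Matrix.transpose_mul, Matrix.transpose_mul, Matrix.transpose_transpose, hWsym,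
      Matrix.mul_assoc]
  have hUnit : IsUnit B.det := hB.det_pos.ne'.isUnit
  have hBinv : B⁻¹ * B = 1 := Matrix.nonsing_inv_mul B hUnit
  have hBinvsym : (B⁻¹)ᵀ = B⁻¹ := by
    rw [Matrix.transpose_nonsing_inv, hBsym]
  have hproj : (B⁻¹ * Ψ) * W * (B⁻¹ * Ψ)ᵀ = B⁻¹ := by
    rw [Matrix.transpose_mul, hBinvsym]
    calc B⁻¹ * Ψ * W * (Ψᵀ * B⁻¹) = B⁻¹ * (Ψ * W * Ψᵀ) * B⁻¹ := by
          simp only [Matrix.mul_assoc]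
    _ = B⁻¹ * B * B⁻¹ := by rw [hBeq]
    _ = B⁻¹ := by rw [hBinv, Matrix.one_mul]
  have key : ∀ (σm : Fin n → ℝ),
      Dmat n p σv Ψ wk * covMat n σm * (Dmat n p σv Ψ wk)ᵀ
        = (B⁻¹ * Ψ) * (W * covMat n σm * W) * (B⁻¹ * Ψ)ᵀ := by
    intro σm
    simp only [Dmat, ← hBdef, ← hW, Matrix.transpose_mul, hWsym, hBinvsym]
    simp only [Matrix.mul_assoc]
  constructor
  · -- inequality
    have hrw : (1 + δ) • B⁻¹ - Dmat n p σv Ψ wk * covMat n σ0 * (Dmat n p σv Ψ wk)ᵀ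
        = (B⁻¹ * Ψ) * ((1 + δ) • W - W * covMat n σ0 * W) * (B⁻¹ * Ψ)ᵀ := by
      rw [key σ0, Matrix.mul_sub, Matrix.sub_mul, Matrix.mul_smul, Matrix.smul_mul, hproj]
    rw [LoewnerLE, hrw]
    have hM : ((1 + δ) • W - W * covMat n σ0 * W).PosSemidef := by
      have hdiag : (1 + δ) • W - W * covMat n σ0 * W
          = Matrix.diagonal (fun i =>
              (1 + δ) * (wk i / σv i ^ 2) - (wk i / σv i ^ 2) * σ0 i ^ 2 * (wk i / σv i ^ 2)) := by
        rw [hW, Wmat, covMat, Matrix.diagonal_mul_diagonal, Matrix.diagonal_mul_diagonal]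
        ext a b
        rcases eq_or_ne a b with h | h
        · subst h
          simp [Matrix.sub_apply, Matrix.smul_apply, Matrix.diagonal_apply_eq, smul_eq_mul]
        · simp [Matrix.sub_apply, Matrix.smul_apply, Matrix.diagonal_apply_ne _ h]
      rw [hdiag]
      refine Matrix.posSemidef_diagonal_iff.mpr fun i => ?_
      have hσi : (0:ℝ) < σv i ^ 2 := pow_pos (hσ i) 2
      have hσine : σv i ^ 2 ≠ 0 := hσi.ne'
      have hw0 := (hw i).1
      have hw1 := (hw i).2
      have h2 : σ0 i ^ 2 ≤ (1 + δ) * σv i ^ 2 := (hA4 i).2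
      have hinv : (0:ℝ) < (σv i ^ 2)⁻¹ := inv_pos.mpr hσi
      have h3 : wk i * wk i * ((σv i ^ 2)⁻¹ * (σv i ^ 2)⁻¹) * σ0 i ^ 2
          ≤ wk i * wk i * ((σv i ^ 2)⁻¹ * (σv i ^ 2)⁻¹) * ((1 + δ) * σv i ^ 2) :=
        mul_le_mul_of_nonneg_left h2 (by positivity)
      have h4 : wk i * wk i * ((σv i ^ 2)⁻¹ * (σv i ^ 2)⁻¹) * ((1 + δ) * σv i ^ 2)
          = (1 + δ) * (wk i * wk i) * (σv i ^ 2)⁻¹ := by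
        field_simp
      have h5 : (1 + δ) * (wk i * wk i) * (σv i ^ 2)⁻¹ ≤ (1 + δ) * wk i * (σv i ^ 2)⁻¹ := by
        have hwq : wk i * wk i ≤ wk i := by nlinarith
        have h1δ : (0:ℝ) ≤ 1 + δ := by linarith
        nlinarith [mul_le_mul_of_nonneg_right (mul_le_mul_of_nonneg_left hwq h1δ) hinv.le]
      have e1 : (wk i / σv i ^ 2) * σ0 i ^ 2 * (wk i / σv i ^ 2)
          = wk i * wk i * ((σv i ^ 2)⁻¹ * (σv i ^ 2)⁻¹) * σ0 i ^ 2 := by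
        rw [div_eq_mul_inv]; ring
      have e2 : (1 + δ) * (wk i / σv i ^ 2) = (1 + δ) * wk i * (σv i ^ 2)⁻¹ := by
        rw [div_eq_mul_inv]; ring
      rw [sub_nonneg, e1, e2]
      linarith
    have := hM.mul_mul_conjTranspose_same (B⁻¹ * Ψ)
    simpa using this
  · -- equality
    intro hw01 heq
    have hWW : W * covMat n σ0 * W = W := by
      rw [hW, Wmat, covMat, Matrix.diagonal_mul_diagonal, Matrix.diagonal_mul_diagonal]
      refine congrArg Matrix.diagonal (funext fun i => ?_)
      have hσi : σv i ^ 2 ≠ 0 := (pow_pos (hσ i) 2).ne'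
      rcases hw01 i with h | h
      · simp [h]
      · rw [heq i, h]; field_simp
    rw [key σ0, hWW, hproj]


end SpatialAdapt
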